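/- arXiv:1609.00343 — 3 statements merged into one kernel-verified Lean document; each statement's English description precedes it below -/
import Mathlib

section
/- Let N ≥ 1 and let s ∈ ℕ, s ≥ 1. If μ and ν are Borel probability measures on ℝ^N with finite absolute moments up to order s and with equal moments up to order s − 1, i.e. ∫ v^β dμ(v) = ∫ v^β dν(v) for every multi-index β with |β| ≤ s − 1, then d_s(μ, ν) < ∞. -/
open MeasureTheory Filter Topology ENNReal

noncomputable def charFun' {N : ℕ} (μ : Measure (EuclideanSpace ℝ (Fin N)))
    (x : EuclideanSpace ℝ (Fin N)) : ℂ :=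
  ∫ v, Complex.exp (-(((inner ℝ x v : ℝ) : ℂ) * Complex.I)) ∂μ

noncomputable def dFourier {N : ℕ} (s : ℝ)
    (μ ν : Measure (EuclideanSpace ℝ (Fin N))) : ℝ≥0∞ :=
  ⨆ (x : EuclideanSpace ℝ (Fin N)) (_ : x ≠ 0),
    ENNReal.ofReal (‖charFun' μ x - charFun' ν x‖ / ‖x‖ ^ s)

/- ### Auxiliary lemmas -/

section Aux

variable {N : ℕ}

/-- Taylor bound for `exp (i t)` (with a crude constant). -/
lemma expI_taylor_bound (n : ℕ) (t : ℝ) :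
    ‖Complex.exp (t * Complex.I) -
        ∑ k ∈ Finset.range n, ((t : ℂ) * Complex.I) ^ k / (Nat.factorial k : ℂ)‖
      ≤ |t| ^ n := by
  induction n generalizing t with
  | zero => simp [Complex.norm_exp]
  | succ n ih =>
    set F : ℕ → ℝ → ℂ := fun m u =>
      Complex.exp (u * Complex.I) -
        ∑ k ∈ Finset.range m, ((u : ℂ) * Complex.I) ^ k / (Nat.factorial k : ℂ)
      with hF
    have hL : ∀ u : ℝ, HasDerivAt (fun u : ℝ => (u : ℂ) * Complex.I) Complex.I u := by
      intro u
      simpa using (Complex.ofRealCLM.hasDerivAt (x := u)).mul_const Complex.I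
    have hderiv : ∀ u : ℝ, HasDerivAt (F (n+1)) (Complex.I * F n u) u := by
      intro u
      have hexp : HasDerivAt (fun u : ℝ => Complex.exp ((u:ℂ) * Complex.I))
          (Complex.exp ((u:ℂ) * Complex.I) * Complex.I) u := (hL u).cexp
      have hsum : HasDerivAt
          (fun u : ℝ => ∑ k ∈ Finset.range (n+1),
            ((u:ℂ) * Complex.I) ^ k / (Nat.factorial k : ℂ))
          (∑ k ∈ Finset.range (n+1),
            ((k : ℂ) * ((u:ℂ) * Complex.I) ^ (k-1) * Complex.I) / (Nat.factorial k : ℂ)) u := by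
        apply HasDerivAt.fun_sum
        intro k _
        have hp : HasDerivAt (fun u : ℝ => ((u:ℂ) * Complex.I) ^ k)
            ((k : ℂ) * ((u:ℂ) * Complex.I) ^ (k-1) * Complex.I) u := by
          have := HasDerivAt.comp (𝕜 := ℝ) u (hasDerivAt_pow k ((u:ℂ) * Complex.I)) (hL u)
          exact this
        exact hp.div_const _
      have := hexp.sub hsum
      refine HasDerivAt.congr_deriv this ?_
      rw [Finset.sum_range_succ']
      have hterm : ∀ i : ℕ,
          (((i+1 : ℕ) : ℂ) * ((u:ℂ) * Complex.I) ^ ((i+1)-1) * Complex.I) /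
              (Nat.factorial (i+1) : ℂ) =
            Complex.I * (((u:ℂ) * Complex.I) ^ i / (Nat.factorial i : ℂ)) := by
        intro i
        have h1 : (Nat.factorial (i+1) : ℂ) = ((i : ℂ) + 1) * (Nat.factorial i : ℂ) := by
          rw [Nat.factorial_succ]; push_cast; ring
        have h2 : (Nat.factorial i : ℂ) ≠ 0 := Nat.cast_ne_zero.2 (Nat.factorial_ne_zero i)
        have h3 : ((i : ℂ) + 1) ≠ 0 := by
          norm_cast
        rw [Nat.add_sub_cancel, h1]
        push_cast
        field_simp
      simp only [hterm, Nat.cast_zero, zero_mul, zero_div, add_zero, Nat.factorial_zero]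
      rw [hF]
      simp only []
      rw [mul_sub, Finset.mul_sum, mul_comm Complex.I (Complex.exp _)]
    have hF0 : F (n+1) 0 = 0 := by
      simp [hF, Finset.sum_range_succ']
    have hcont : Continuous (fun u : ℝ => Complex.I * F n u) := by
      apply Continuous.mul continuous_const
      apply Continuous.sub
      · exact Complex.continuous_exp.comp (by continuity)
      · apply continuous_finset_sum
        intro k _
        exact ((Complex.continuous_ofReal.mul continuous_const).pow k).div_const _
    have hFTC : ∫ u in (0:ℝ)..t, Complex.I * F n u = F (n+1) t - F (n+1) 0 :=
      intervalIntegral.integral_eq_sub_of_hasDerivAt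
        (fun u _ => hderiv u) (hcont.intervalIntegrable 0 t)
    have hbound : ‖∫ u in (0:ℝ)..t, Complex.I * F n u‖ ≤ |t| ^ n * |t - 0| := by
      apply intervalIntegral.norm_integral_le_of_norm_le_const
      intro u hu
      have h1 : |u| ≤ |t| := by
        rcases Set.mem_uIoc.1 hu with h | h
        · rw [abs_of_pos h.1]
          exact h.2.trans (le_abs_self t)
        · have ht : t < 0 := lt_of_lt_of_le h.1 h.2
          rw [abs_of_nonpos h.2, abs_of_neg ht]
          linarith [h.1]
      calc ‖Complex.I * F n u‖ = ‖F n u‖ := by simp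
        _ ≤ |u| ^ n := ih u
        _ ≤ |t| ^ n := pow_le_pow_left₀ (abs_nonneg u) h1 n
    rw [hF] at hFTC
    have : ‖F (n+1) t‖ ≤ |t| ^ n * |t| := by
      rw [show F (n+1) t = F (n+1) t - F (n+1) 0 by rw [hF0]; ring, ← hFTC]
      simpa using hbound
    calc ‖F (n+1) t‖ ≤ |t| ^ n * |t| := this
      _ = |t| ^ (n+1) := by ring

lemma coord_abs_le_norm (v : EuclideanSpace ℝ (Fin N)) (i : Fin N) : |v i| ≤ ‖v‖ := by
  rw [EuclideanSpace.norm_eq, ← Real.sqrt_sq_eq_abs (v i)]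
  apply Real.sqrt_le_sqrt
  have := Finset.single_le_sum (f := fun j : Fin N => ‖v j‖ ^ 2)
    (fun j _ => sq_nonneg _) (Finset.mem_univ i)
  simpa [Real.norm_eq_abs, sq_abs] using this

lemma monomial_abs_le (v : EuclideanSpace ℝ (Fin N)) (β : Fin N → ℕ) :
    |∏ i, v i ^ β i| ≤ ‖v‖ ^ (∑ i, β i) := by
  rw [Finset.abs_prod, ← Finset.prod_pow_eq_pow_sum]
  apply Finset.prod_le_prod (fun i _ => abs_nonneg _)
  intro i _
  rw [abs_pow]
  exact pow_le_pow_left₀ (abs_nonneg _) (coord_abs_le_norm v i) _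

lemma pow_le_one_add_pow {a : ℝ} (ha : 0 ≤ a) {k s : ℕ} (h : k ≤ s) :
    a ^ k ≤ 1 + a ^ s := by
  rcases le_or_gt a 1 with h1 | h1
  · have : a ^ k ≤ 1 := pow_le_one₀ ha h1
    nlinarith [pow_nonneg ha s]
  · have : a ^ k ≤ a ^ s := pow_le_pow_right₀ h1.le h
    nlinarith

lemma monomial_integrable (μ : Measure (EuclideanSpace ℝ (Fin N)))
    [IsProbabilityMeasure μ] {s : ℕ}
    (hμfin : Integrable (fun v => ‖v‖ ^ s) μ)
    (β : Fin N → ℕ) (hβ : (∑ i, β i) ≤ s) :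
    Integrable (fun v => ∏ i, (v i) ^ (β i)) μ := by
  have hcont : Continuous (fun v : EuclideanSpace ℝ (Fin N) => ∏ i, (v i) ^ (β i)) := by
    apply continuous_finset_prod
    intro i _
    exact ((EuclideanSpace.proj i).continuous).pow _ |>.comp continuous_id
  apply Integrable.mono' (integrable_const (1:ℝ) |>.add hμfin) hcont.aestronglyMeasurable
  filter_upwards with v
  calc ‖∏ i, (v i) ^ (β i)‖ = |∏ i, (v i) ^ (β i)| := rfl
    _ ≤ ‖v‖ ^ (∑ i, β i) := monomial_abs_le v β
    _ ≤ 1 + ‖v‖ ^ s := pow_le_one_add_pow (norm_nonneg v) hβ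

lemma inner_eq_sum (x v : EuclideanSpace ℝ (Fin N)) : (inner ℝ x v : ℝ) = ∑ i, x i * v i := by
  simp [PiLp.inner_apply, RCLike.inner_apply, mul_comm]

lemma inner_pow_expand (x v : EuclideanSpace ℝ (Fin N)) (k : ℕ) :
    (inner ℝ x v : ℝ) ^ k = ∑ β ∈ Finset.piAntidiag Finset.univ k,
      ((Nat.multinomial Finset.univ β : ℝ) * ∏ i, (x i) ^ (β i)) * ∏ i, (v i) ^ (β i) := by
  rw [inner_eq_sum, Finset.sum_pow_eq_sum_piAntidiag]
  refine Finset.sum_congr rfl fun β hβ => ?_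
  rw [mul_assoc]
  congr 1
  rw [← Finset.prod_mul_distrib]
  exact Finset.prod_congr rfl fun i _ => mul_pow _ _ _

lemma inner_pow_integral_eq {s : ℕ}
    (μ ν : Measure (EuclideanSpace ℝ (Fin N)))
    [IsProbabilityMeasure μ] [IsProbabilityMeasure ν]
    (hμfin : Integrable (fun v => ‖v‖ ^ s) μ)
    (hνfin : Integrable (fun v => ‖v‖ ^ s) ν)
    (heq : ∀ β : Fin N → ℕ, (∑ i, β i) ≤ s - 1 →
      ∫ v, ∏ i, (v i) ^ (β i) ∂μ = ∫ v, ∏ i, (v i) ^ (β i) ∂ν)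
    (x : EuclideanSpace ℝ (Fin N)) (k : ℕ) (hk : k ≤ s - 1) :
    ∫ v, (inner ℝ x v : ℝ) ^ k ∂μ = ∫ v, (inner ℝ x v : ℝ) ^ k ∂ν := by
  have hks : k ≤ s := hk.trans (Nat.sub_le s 1)
  have key : ∀ (ρ : Measure (EuclideanSpace ℝ (Fin N))), IsProbabilityMeasure ρ →
      Integrable (fun v => ‖v‖ ^ s) ρ →
      ∫ v, (inner ℝ x v : ℝ) ^ k ∂ρ = ∑ β ∈ Finset.piAntidiag Finset.univ k,
        ((Nat.multinomial Finset.univ β : ℝ) * ∏ i, (x i) ^ (β i)) *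
          ∫ v, ∏ i, (v i) ^ (β i) ∂ρ := by
    intro ρ hρ hρfin
    rw [show (fun v : EuclideanSpace ℝ (Fin N) => (inner ℝ x v : ℝ) ^ k) =
        fun v => ∑ β ∈ Finset.piAntidiag Finset.univ k,
          ((Nat.multinomial Finset.univ β : ℝ) * ∏ i, (x i) ^ (β i)) * ∏ i, (v i) ^ (β i)
      from funext fun v => inner_pow_expand x v k]
    rw [integral_finset_sum]
    · refine Finset.sum_congr rfl fun β hβ => ?_
      exact integral_const_mul _ _
    · intro β hβ
      have hβk : (∑ i, β i) ≤ s := by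
        have h2 : ∑ i, β i = k := by simpa using (Finset.mem_piAntidiag.1 hβ).1
        omega
      exact (monomial_integrable ρ hρfin β hβk).const_mul _
  rw [key μ ‹_› hμfin, key ν ‹_› hνfin]
  refine Finset.sum_congr rfl fun β hβ => ?_
  congr 1
  apply heq
  have h2 : ∑ i, β i = k := by simpa using (Finset.mem_piAntidiag.1 hβ).1
  omega

lemma inner_pow_integrable (μ : Measure (EuclideanSpace ℝ (Fin N)))
    [IsProbabilityMeasure μ] {s : ℕ}
    (hμfin : Integrable (fun v => ‖v‖ ^ s) μ)
    (x : EuclideanSpace ℝ (Fin N)) (k : ℕ) (hk : k ≤ s) :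
    Integrable (fun v => (inner ℝ x v : ℝ) ^ k) μ := by
  have hcont : Continuous fun v : EuclideanSpace ℝ (Fin N) => (inner ℝ x v : ℝ) :=
    Continuous.inner continuous_const continuous_id
  apply Integrable.mono' (((integrable_const (1:ℝ)).add hμfin).const_mul (‖x‖ ^ k))
    ((hcont.pow k).aestronglyMeasurable)
  filter_upwards with v
  calc ‖(inner ℝ x v : ℝ) ^ k‖ = |(inner ℝ x v : ℝ)| ^ k := by
        rw [Real.norm_eq_abs, abs_pow]
    _ ≤ (‖x‖ * ‖v‖) ^ k :=
        pow_le_pow_left₀ (abs_nonneg _) (abs_real_inner_le_norm x v) k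
    _ = ‖x‖ ^ k * ‖v‖ ^ k := mul_pow _ _ _
    _ ≤ ‖x‖ ^ k * (1 + ‖v‖ ^ s) := by
        apply mul_le_mul_of_nonneg_left (pow_le_one_add_pow (norm_nonneg v) hk)
          (pow_nonneg (norm_nonneg x) k)

end Aux

/-- For integer s ≥ 1, if two probability measures have finite absolute
moments up to order s and equal moments up to order s − 1, then d_s(μ,ν) < ∞. -/
theorem dFourier_lt_top_of_eq_moments_int (N : ℕ) (hN : 1 ≤ N)
    (s : ℕ) (hs : 1 ≤ s)
    (μ ν : Measure (EuclideanSpace ℝ (Fin N)))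
    (hμprob : IsProbabilityMeasure μ) (hνprob : IsProbabilityMeasure ν)
    (hμfin : Integrable (fun v => ‖v‖ ^ s) μ)
    (hνfin : Integrable (fun v => ‖v‖ ^ s) ν)
    (heq : ∀ β : Fin N → ℕ, (∑ i, β i) ≤ s - 1 →
      ∫ v, ∏ i, (v i) ^ (β i) ∂μ = ∫ v, ∏ i, (v i) ^ (β i) ∂ν) :
    dFourier (s : ℝ) μ ν < ⊤ := by
  set C : ℝ := (∫ v, ‖v‖ ^ s ∂μ) + ∫ v, ‖v‖ ^ s ∂ν with hC
  have hxbound : ∀ x : EuclideanSpace ℝ (Fin N),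
      ‖charFun' μ x - charFun' ν x‖ ≤ C * ‖x‖ ^ s := by
    intro x
    set t : EuclideanSpace ℝ (Fin N) → ℝ := fun v => (inner ℝ x v : ℝ) with ht
    set h : EuclideanSpace ℝ (Fin N) → ℂ :=
      fun v => Complex.exp (-(((t v) : ℂ) * Complex.I)) with hh
    set P : EuclideanSpace ℝ (Fin N) → ℂ :=
      fun v => ∑ k ∈ Finset.range s,
        (-(((t v) : ℂ) * Complex.I)) ^ k / (Nat.factorial k : ℂ) with hP
    have htaylor : ∀ v, ‖h v - P v‖ ≤ ‖x‖ ^ s * ‖v‖ ^ s := by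
      intro v
      have hb := expI_taylor_bound s (-(t v))
      have e1 : ((-(t v) : ℝ) : ℂ) * Complex.I = -(((t v) : ℂ) * Complex.I) := by
        push_cast; ring
      rw [e1] at hb
      calc ‖h v - P v‖ ≤ |(-(t v))| ^ s := hb
        _ = |t v| ^ s := by rw [abs_neg]
        _ ≤ (‖x‖ * ‖v‖) ^ s :=
            pow_le_pow_left₀ (abs_nonneg _) (abs_real_inner_le_norm x v) s
        _ = ‖x‖ ^ s * ‖v‖ ^ s := mul_pow _ _ _
    have ht_cont : Continuous t := Continuous.inner continuous_const continuous_id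
    have hhcont : Continuous h :=
      Complex.continuous_exp.comp
        (((Complex.continuous_ofReal.comp ht_cont).mul continuous_const).neg)
    have hint_h : ∀ (ρ : Measure (EuclideanSpace ℝ (Fin N))), IsProbabilityMeasure ρ →
        Integrable h ρ := by
      intro ρ hρ
      apply Integrable.mono' (integrable_const (1:ℝ)) hhcont.aestronglyMeasurable
      filter_upwards with v
      simp [hh, Complex.norm_exp]
    have hk_int : ∀ (ρ : Measure (EuclideanSpace ℝ (Fin N))), IsProbabilityMeasure ρ →
        Integrable (fun v : EuclideanSpace ℝ (Fin N) => ‖v‖ ^ s) ρ →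
        ∀ k ∈ Finset.range s,
          Integrable (fun v => (-(((t v) : ℂ) * Complex.I)) ^ k / (Nat.factorial k : ℂ)) ρ := by
      intro ρ hρ hρfin k hk
      have hkle : k ≤ s := (Finset.mem_range.1 hk).le
      have hre : Integrable (fun v => (t v) ^ k) ρ :=
        inner_pow_integrable ρ hρfin x k hkle
      have hrw : (fun v => (-(((t v) : ℂ) * Complex.I)) ^ k / (Nat.factorial k : ℂ)) =
          fun v => ((-Complex.I) ^ k / (Nat.factorial k : ℂ)) * (((t v) ^ k : ℝ) : ℂ) := by
        funext v; push_cast; ring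
      rw [hrw]
      exact (hre.ofReal).const_mul _
    have hterm_val : ∀ (ρ : Measure (EuclideanSpace ℝ (Fin N))) (k : ℕ),
        ∫ v, (-(((t v) : ℂ) * Complex.I)) ^ k / (Nat.factorial k : ℂ) ∂ρ =
          ((-Complex.I) ^ k / (Nat.factorial k : ℂ)) * ((∫ v, (t v) ^ k ∂ρ : ℝ) : ℂ) := by
      intro ρ k
      have hrw : (fun v => (-(((t v) : ℂ) * Complex.I)) ^ k / (Nat.factorial k : ℂ)) =
          fun v => ((-Complex.I) ^ k / (Nat.factorial k : ℂ)) * (((t v) ^ k : ℝ) : ℂ) := by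
        funext v; push_cast; ring
      rw [hrw, integral_const_mul]
      congr 1
      exact integral_ofReal
    have hPeq : ∫ v, P v ∂μ = ∫ v, P v ∂ν := by
      rw [hP]
      rw [integral_finset_sum _ (hk_int μ hμprob hμfin),
        integral_finset_sum _ (hk_int ν hνprob hνfin)]
      refine Finset.sum_congr rfl fun k hk => ?_
      have hkle : k ≤ s - 1 := Nat.le_sub_one_of_lt (Finset.mem_range.1 hk)
      rw [hterm_val μ k, hterm_val ν k,
        inner_pow_integral_eq μ ν hμfin hνfin heq x k hkle]
    have hint_P : ∀ (ρ : Measure (EuclideanSpace ℝ (Fin N))), IsProbabilityMeasure ρ →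
        Integrable (fun v : EuclideanSpace ℝ (Fin N) => ‖v‖ ^ s) ρ → Integrable P ρ := by
      intro ρ hρ hρfin
      exact integrable_finset_sum _ (hk_int ρ hρ hρfin)
    have hch : ∀ ρ : Measure (EuclideanSpace ℝ (Fin N)), charFun' ρ x = ∫ v, h v ∂ρ :=
      fun ρ => rfl
    have hsub : charFun' μ x - charFun' ν x =
        (∫ v, (h v - P v) ∂μ) - ∫ v, (h v - P v) ∂ν := by
      rw [integral_sub (hint_h μ hμprob) (hint_P μ hμprob hμfin),
        integral_sub (hint_h ν hνprob) (hint_P ν hνprob hνfin), hPeq, hch μ, hch ν]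
      ring
    have hnorm : ∀ (ρ : Measure (EuclideanSpace ℝ (Fin N))), IsProbabilityMeasure ρ →
        Integrable (fun v : EuclideanSpace ℝ (Fin N) => ‖v‖ ^ s) ρ →
        ‖∫ v, (h v - P v) ∂ρ‖ ≤ ‖x‖ ^ s * ∫ v, ‖v‖ ^ s ∂ρ := by
      intro ρ hρ hρfin
      calc ‖∫ v, (h v - P v) ∂ρ‖ ≤ ∫ v, ‖x‖ ^ s * ‖v‖ ^ s ∂ρ := by
            apply norm_integral_le_of_norm_le (hρfin.const_mul _)
            filter_upwards with v using htaylor v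
        _ = ‖x‖ ^ s * ∫ v, ‖v‖ ^ s ∂ρ := integral_const_mul _ _
    calc ‖charFun' μ x - charFun' ν x‖
        ≤ ‖∫ v, (h v - P v) ∂μ‖ + ‖∫ v, (h v - P v) ∂ν‖ := by
          rw [hsub]; exact norm_sub_le _ _
      _ ≤ ‖x‖ ^ s * (∫ v, ‖v‖ ^ s ∂μ) + ‖x‖ ^ s * ∫ v, ‖v‖ ^ s ∂ν :=
          add_le_add (hnorm μ hμprob hμfin) (hnorm ν hνprob hνfin)
      _ = C * ‖x‖ ^ s := by rw [hC]; ring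
  rw [dFourier]
  refine lt_of_le_of_lt (iSup_le fun x => iSup_le fun hx => ?_)
    (ENNReal.ofReal_lt_top : ENNReal.ofReal C < ⊤)
  apply ENNReal.ofReal_le_ofReal
  have hxpos : (0:ℝ) < ‖x‖ ^ s := pow_pos (norm_pos_iff.2 hx) s
  rw [Real.rpow_natCast, div_le_iff₀ hxpos]
  exact hxbound x
end

section
/- Let N ≥ 1 and let s ∈ ℕ, s ≥ 1. Let μ and ν be Borel probability measures on ℝ^N whose characteristic functions φ_μ and φ_ν are s times differentiable at 0 and have equal derivatives at 0 up to order s − 1 (i.e. the iterated Fréchet derivatives of φ_μ and φ_ν at 0 agree for all orders k ≤ s − 1). Then d_s(μ, ν) < ∞. -/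
open MeasureTheory Filter Topology ENNReal

section Aux

open Asymptotics

variable {E : Type u} [NormedAddCommGroup E] [NormedSpace ℝ E]

lemma aux_isBigO : ∀ (s : ℕ) {F : Type u} [NormedAddCommGroup F] [NormedSpace ℝ F] (f : E → F),
    ContDiffAt ℝ (s + 1 : ℕ) f 0 →
    (∀ k : ℕ, k ≤ s → iteratedFDeriv ℝ k f 0 = 0) →
    f =O[𝓝 (0 : E)] fun x => ‖x‖ ^ (s + 1) := by
  intro s
  induction s with
  | zero =>
    intro F _ _ f hf h
    have hf0 : f 0 = 0 := by
      have := h 0 le_rfl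
      have : ‖f 0‖ = 0 := by rw [← norm_iteratedFDeriv_zero (𝕜 := ℝ), this, norm_zero]
      simpa using this
    have hdiff : DifferentiableAt ℝ f 0 := hf.differentiableAt (by simp)
    have h1 : (fun x => f x - f 0) =O[𝓝 (0 : E)] fun x => x - 0 := hdiff.isBigO_sub
    have h2 : (fun x : E => x - 0) =O[𝓝 (0 : E)] fun x => ‖x‖ ^ (0 + 1) :=
      isBigO_of_le _ fun x => by simp [Real.norm_of_nonneg (norm_nonneg x)]
    exact (h1.trans h2).congr_left fun x => by rw [hf0, sub_zero]
  | succ s IH =>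
    intro F _ _ f hf h
    set g := fderiv ℝ f with hg_def
    have hg : ContDiffAt ℝ (s + 1 : ℕ) g 0 := by
      apply hf.fderiv_right
      norm_cast
    have hg0 : ∀ k : ℕ, k ≤ s → iteratedFDeriv ℝ k g 0 = 0 := by
      intro k hk
      have : ‖iteratedFDeriv ℝ k g 0‖ = 0 := by
        rw [norm_iteratedFDeriv_fderiv, h (k + 1) (by omega), norm_zero]
      simpa using this
    have hO := IH g hg hg0
    obtain ⟨C, hC0, hCb⟩ := hO.exists_pos
    rw [isBigOWith_iff] at hCb
    obtain ⟨u, hu, hcd⟩ := hf.contDiffOn (m := 1) (by exact_mod_cast Nat.one_le_iff_ne_zero.2 (by omega)) (by simp)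
    have hev : ∀ᶠ x in 𝓝 (0 : E), ‖g x‖ ≤ C * ‖‖x‖ ^ (s + 1)‖ ∧ x ∈ interior u :=
      hCb.and (isOpen_interior.eventually_mem (mem_interior_iff_mem_nhds.2 hu))
    obtain ⟨ε, hε, hball⟩ := Metric.eventually_nhds_iff.1 hev
    have hf0 : f 0 = 0 := by
      have := h 0 (by omega)
      have h2 : ‖f 0‖ = 0 := by rw [← norm_iteratedFDeriv_zero (𝕜 := ℝ), this, norm_zero]
      simpa using h2
    rw [isBigO_iff]
    refine ⟨C, Metric.eventually_nhds_iff.2 ⟨ε, hε, fun x hx => ?_⟩⟩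
    -- x satisfies dist x 0 < ε, i.e. ‖x‖ < ε
    have hxε : ‖x‖ < ε := by simpa [dist_eq_norm] using hx
    set S : Set E := Metric.closedBall 0 ‖x‖ ∩ Metric.ball 0 ε with hS_def
    have hSsub : ∀ y ∈ S, ‖g y‖ ≤ C * ‖x‖ ^ (s + 1) ∧ DifferentiableAt ℝ f y := by
      intro y hy
      have hy1 : ‖y‖ ≤ ‖x‖ := by simpa [dist_eq_norm] using hy.1
      have hy2 : dist y 0 < ε := by simpa using hy.2
      obtain ⟨hb, hmem⟩ := hball hy2
      constructor
      · calc ‖g y‖ ≤ C * ‖‖y‖ ^ (s + 1)‖ := hb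
          _ = C * ‖y‖ ^ (s + 1) := by rw [Real.norm_of_nonneg (by positivity)]
          _ ≤ C * ‖x‖ ^ (s + 1) := by
              gcongr
      · exact ((hcd.mono interior_subset).differentiableOn (by simp)).differentiableAt
          (isOpen_interior.mem_nhds hmem)
    have hconv : Convex ℝ S := (convex_closedBall _ _).inter (convex_ball _ _)
    have h0S : (0 : E) ∈ S := by
      constructor
      · simpa using norm_nonneg x
      · simpa using hε
    have hxS : x ∈ S := by
      constructor
      · simp [Metric.mem_closedBall, dist_eq_norm]
      · simpa [dist_eq_norm] using hxε
    have hmvt := Convex.norm_image_sub_le_of_norm_hasFDerivWithin_le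
      (f := f) (f' := g) (s := S) (C := C * ‖x‖ ^ (s + 1))
      (fun y hy => ((hSsub y hy).2.hasFDerivAt).hasFDerivWithinAt)
      (fun y hy => (hSsub y hy).1) hconv h0S hxS
    rw [hf0, sub_zero, sub_zero] at hmvt
    calc ‖f x‖ ≤ C * ‖x‖ ^ (s + 1) * ‖x‖ := hmvt
      _ = C * ‖x‖ ^ (s + 1 + 1) := by ring
      _ = C * ‖‖x‖ ^ (s + 1 + 1)‖ := by rw [Real.norm_of_nonneg (by positivity)]

lemma aux_sub_iteratedFDeriv {F : Type v} [NormedAddCommGroup F] [NormedSpace ℝ F] {f g : E → F} {u : Set E} (hu : IsOpen u) (h0 : (0 : E) ∈ u)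
    {k : ℕ} (hf : ContDiffOn ℝ k f u) (hg : ContDiffOn ℝ k g u) :
    iteratedFDeriv ℝ k (fun x => f x - g x) 0 =
      iteratedFDeriv ℝ k f 0 - iteratedFDeriv ℝ k g 0 := by
  have hud : UniqueDiffOn ℝ u := hu.uniqueDiffOn
  have e1 := (iteratedFDerivWithin_of_isOpen (𝕜 := ℝ) (f := fun x => f x - g x) k hu) h0
  have e2 := (iteratedFDerivWithin_of_isOpen (𝕜 := ℝ) (f := f) k hu) h0
  have e3 := (iteratedFDerivWithin_of_isOpen (𝕜 := ℝ) (f := g) k hu) h0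
  rw [← e1, ← e2, ← e3]
  simp only [sub_eq_add_neg]
  rw [iteratedFDerivWithin_add_apply' (hf 0 h0) (hg.neg 0 h0) hud h0]
  congr 1
  exact iteratedFDerivWithin_neg_apply hud h0

end Aux


lemma norm_charFun'_le_one {N : ℕ} (μ : Measure (EuclideanSpace ℝ (Fin N)))
    [IsProbabilityMeasure μ] (x : EuclideanSpace ℝ (Fin N)) : ‖charFun' μ x‖ ≤ 1 := by
  rw [charFun']
  have := norm_integral_le_of_norm_le_const (μ := μ)
    (f := fun v => Complex.exp (-(((inner ℝ x v : ℝ) : ℂ) * Complex.I))) (C := 1)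
    (Eventually.of_forall fun v => by
      rw [Complex.norm_exp]
      simp)
  simpa using this

/-- For integer s ≥ 1, if the characteristic functions of μ and ν are s times
differentiable at 0 with equal iterated Fréchet derivatives at 0 up to order
s − 1, then d_s(μ,ν) < ∞. -/
theorem dFourier_lt_top_of_eq_derivs_int (N : ℕ) (hN : 1 ≤ N)
    (s : ℕ) (hs : 1 ≤ s)
    (μ ν : Measure (EuclideanSpace ℝ (Fin N)))
    (hμprob : IsProbabilityMeasure μ) (hνprob : IsProbabilityMeasure ν)
    (hμd : ContDiffAt ℝ (s : ℕ∞) (charFun' μ) 0)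
    (hνd : ContDiffAt ℝ (s : ℕ∞) (charFun' ν) 0)
    (heq : ∀ k : ℕ, k ≤ s - 1 →
      iteratedFDeriv ℝ k (charFun' μ) 0 = iteratedFDeriv ℝ k (charFun' ν) 0) :
    dFourier (s : ℝ) μ ν < ⊤ := by
  obtain ⟨t, rfl⟩ : ∃ t, s = t + 1 := ⟨s - 1, (Nat.succ_pred_eq_of_pos hs).symm⟩
  set f : EuclideanSpace ℝ (Fin N) → ℂ := fun x => charFun' μ x - charFun' ν x with hf_def
  have hfd : ContDiffAt ℝ ((t + 1 : ℕ) : WithTop ℕ∞) f 0 := by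
    exact_mod_cast hμd.sub hνd
  -- derivatives vanish
  obtain ⟨u, hu, hμcd⟩ := hμd.contDiffOn (m := (t + 1 : ℕ)) (by exact_mod_cast le_refl _) (by simp)
  obtain ⟨v, hv, hνcd⟩ := hνd.contDiffOn (m := (t + 1 : ℕ)) (by exact_mod_cast le_refl _) (by simp)
  set W := interior (u ∩ v) with hW_def
  have hWopen : IsOpen W := isOpen_interior
  have h0W : (0 : EuclideanSpace ℝ (Fin N)) ∈ W :=
    mem_interior_iff_mem_nhds.2 (Filter.inter_mem hu hv)
  have hvanish : ∀ k : ℕ, k ≤ t → iteratedFDeriv ℝ k f 0 = 0 := by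
    intro k hk
    have hsub_u : W ⊆ u := interior_subset.trans Set.inter_subset_left
    have hsub_v : W ⊆ v := interior_subset.trans Set.inter_subset_right
    have hμk : ContDiffOn ℝ k (charFun' μ) W :=
      (hμcd.mono hsub_u).of_le (by exact_mod_cast (by omega : k ≤ t + 1))
    have hνk : ContDiffOn ℝ k (charFun' ν) W :=
      (hνcd.mono hsub_v).of_le (by exact_mod_cast (by omega : k ≤ t + 1))
    rw [hf_def, aux_sub_iteratedFDeriv hWopen h0W hμk hνk, heq k (by omega), sub_self]
  have hO := aux_isBigO t f hfd hvanish
  rw [Asymptotics.isBigO_iff] at hO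
  obtain ⟨C, hC⟩ := hO
  obtain ⟨ε, hε, hball⟩ := Metric.eventually_nhds_iff.1 hC
  set M : ℝ := max C (2 / ε ^ (t + 1)) with hM_def
  have key : ∀ x : EuclideanSpace ℝ (Fin N), x ≠ 0 →
      ‖charFun' μ x - charFun' ν x‖ / ‖x‖ ^ ((t + 1 : ℕ) : ℝ) ≤ M := by
    intro x hx
    have hxpos : (0 : ℝ) < ‖x‖ := norm_pos_iff.2 hx
    have hrw : ‖x‖ ^ ((t + 1 : ℕ) : ℝ) = ‖x‖ ^ (t + 1 : ℕ) := Real.rpow_natCast _ _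
    rw [hrw, div_le_iff₀ (by positivity)]
    rcases lt_or_ge ‖x‖ ε with hlt | hge
    · have hb := hball (by simpa [dist_eq_norm] using hlt)
      have : ‖f x‖ ≤ C * ‖x‖ ^ (t + 1) := by
        calc ‖f x‖ ≤ C * ‖‖x‖ ^ (t + 1)‖ := hb
          _ = C * ‖x‖ ^ (t + 1) := by rw [Real.norm_of_nonneg (by positivity)]
      calc ‖charFun' μ x - charFun' ν x‖ = ‖f x‖ := rfl
        _ ≤ C * ‖x‖ ^ (t + 1) := this
        _ ≤ M * ‖x‖ ^ (t + 1) := by gcongr; exact le_max_left _ _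
    · have h2 : ‖charFun' μ x - charFun' ν x‖ ≤ 2 := by
        calc ‖charFun' μ x - charFun' ν x‖ ≤ ‖charFun' μ x‖ + ‖charFun' ν x‖ := norm_sub_le _ _
          _ ≤ 1 + 1 := add_le_add (norm_charFun'_le_one μ x) (norm_charFun'_le_one ν x)
          _ = 2 := by norm_num
      have hεpow : ε ^ (t + 1) ≤ ‖x‖ ^ (t + 1) := pow_le_pow_left₀ hε.le hge _
      calc ‖charFun' μ x - charFun' ν x‖ ≤ 2 := h2
        _ = (2 / ε ^ (t + 1)) * ε ^ (t + 1) := by field_simp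
        _ ≤ M * ‖x‖ ^ (t + 1) := by
            apply mul_le_mul (le_max_right _ _) hεpow (by positivity)
            exact le_trans (by positivity) (le_max_right _ _)
  have : dFourier ((t + 1 : ℕ) : ℝ) μ ν ≤ ENNReal.ofReal M := by
    rw [dFourier]
    exact iSup₂_le fun x hx => ENNReal.ofReal_le_ofReal (key x hx)
  exact lt_of_le_of_lt this ENNReal.ofReal_lt_top
end

section
/- Let N ≥ 1 and s > 0. Let (μ_n) be a sequence of Borel probability measures on ℝ^N that is Cauchy with respect to d_s, and let μ be a Borel probability measure on ℝ^N such that the characteristic functions φ_{μ_n} converge pointwise on ℝ^N to φ_μ. Then d_s(μ_n, μ) → 0 as n → ∞. -/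
open MeasureTheory Filter Topology ENNReal

/-- If a sequence of probability measures is Cauchy for d_s and its
characteristic functions converge pointwise to that of μ, then d_s(μ_n, μ) → 0. -/
theorem dFourier_tendsto_zero_of_cauchy (N : ℕ) (hN : 1 ≤ N)
    (s : ℝ) (hs : 0 < s)
    (μ : ℕ → Measure (EuclideanSpace ℝ (Fin N)))
    (hprob : ∀ n, IsProbabilityMeasure (μ n))
    (μlim : Measure (EuclideanSpace ℝ (Fin N)))
    (hlimprob : IsProbabilityMeasure μlim)
    (hcauchy : ∀ ε : ℝ, 0 < ε → ∃ n₀ : ℕ, ∀ n m : ℕ, n₀ < n → n₀ < m →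
      dFourier s (μ n) (μ m) < ENNReal.ofReal ε)
    (hpt : ∀ x, Tendsto (fun n => charFun' (μ n) x) atTop (𝓝 (charFun' μlim x))) :
    Tendsto (fun n => dFourier s (μ n) μlim) atTop (𝓝 0) := by
  rw [ENNReal.tendsto_nhds_zero]
  intro ε hε
  set δ : ℝ≥0∞ := min ε 1 with hδ
  have hδpos : 0 < δ := lt_min hε zero_lt_one
  have hδtop : δ ≠ ⊤ := ne_top_of_le_ne_top ENNReal.one_ne_top (min_le_right _ _)
  set r : ℝ := δ.toReal with hr
  have hrpos : 0 < r := ENNReal.toReal_pos hδpos.ne' hδtop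
  obtain ⟨n₀, hn₀⟩ := hcauchy r hrpos
  filter_upwards [eventually_gt_atTop n₀] with n hn
  have hmain : dFourier s (μ n) μlim ≤ δ := by
    refine iSup₂_le fun x hx => ?_
    have hq : ‖charFun' (μ n) x - charFun' μlim x‖ / ‖x‖ ^ s ≤ r := by
      have hlim : Tendsto (fun m => ‖charFun' (μ n) x - charFun' (μ m) x‖ / ‖x‖ ^ s)
          atTop (𝓝 (‖charFun' (μ n) x - charFun' μlim x‖ / ‖x‖ ^ s)) :=
        ((tendsto_const_nhds.sub (hpt x)).norm).div_const _
      refine le_of_tendsto hlim ?_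
      filter_upwards [eventually_gt_atTop n₀] with m hm
      have h1 : ENNReal.ofReal (‖charFun' (μ n) x - charFun' (μ m) x‖ / ‖x‖ ^ s)
          ≤ dFourier s (μ n) (μ m) :=
        le_iSup₂ (f := fun x (_ : x ≠ 0) =>
          ENNReal.ofReal (‖charFun' (μ n) x - charFun' (μ m) x‖ / ‖x‖ ^ s)) x hx
      have h2 := lt_of_le_of_lt h1 (hn₀ n m hn hm)
      exact le_of_lt ((ENNReal.ofReal_lt_ofReal_iff hrpos).mp h2)
    calc ENNReal.ofReal (‖charFun' (μ n) x - charFun' μlim x‖ / ‖x‖ ^ s)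
        ≤ ENNReal.ofReal r := ENNReal.ofReal_le_ofReal hq
      _ = δ := ENNReal.ofReal_toReal hδtop
  exact hmain.trans (min_le_left _ _)
end
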